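/- Let V be a field of differential functions in one variable u, and x_1, x_3 ∈ C constants with x_1 ≠ 0. Then F ∈ V satisfies (x_1 ∂ ∘ (1/u') ∂ + x_3 u')F ∈ V_1 (differential order at most 1) if and only if F has differential order at most 0 and F' = (∂F/∂u) u'; i.e., F depends only on u (and x), not on any derivatives of u, and has no explicit x-dependence in the sense that its total derivative is (∂F/∂u)u'. -/

import Mathlib

/-- Let `V` be a field of differential functions in one variable `u`, and let `x₁, x₃` be
constants with `x₁ ≠ 0`.  Then `F ∈ V` satisfies
`(x₁ ∂ ∘ (1/u') ∘ ∂ + x₃ u') F ∈ V₁` (differential order at most `1`) if and only if `F`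
has differential order at most `0` and `F' = (∂F/∂u) u'`. -/
theorem stmt13 (V : Type*) [Field V] [CharZero V]
    (d : V → V) (pd : ℕ → V → V) (u : ℕ → V)
    (hd_add : ∀ a b : V, d (a + b) = d a + d b)
    (hd_mul : ∀ a b : V, d (a * b) = d a * b + a * d b)
    (hpd_add : ∀ n (a b : V), pd n (a + b) = pd n a + pd n b)
    (hpd_mul : ∀ n (a b : V), pd n (a * b) = pd n a * b + a * pd n b)
    (hcomm0 : ∀ f : V, pd 0 (d f) = d (pd 0 f))
    (hcommS : ∀ n (f : V), pd (n + 1) (d f) = d (pd (n + 1) f) + pd n f)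
    (hpd_comm : ∀ m n (f : V), pd m (pd n f) = pd n (pd m f))
    (hfin : ∀ f : V, ∃ N : ℕ, ∀ n, N ≤ n → pd n f = 0)
    (hdu : ∀ n, d (u n) = u (n + 1))
    (hpdu : ∀ m n, pd m (u n) = if m = n then 1 else 0)
    (x1 x3 : V)
    (hx1c : d x1 = 0) (hx3c : d x3 = 0)
    (hx1q : ∀ n, pd n x1 = 0) (hx3q : ∀ n, pd n x3 = 0)
    (hx1 : x1 ≠ 0) (F : V) :
    (∀ n, 2 ≤ n → pd n (x1 * d ((u 1)⁻¹ * d F) + x3 * u 1 * F) = 0) ↔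
      ((∀ n, 1 ≤ n → pd n F = 0) ∧ d F = pd 0 F * u 1) := by
  -- basic facts
  have hd0 : d 0 = 0 := by
    have h := hd_add 0 0
    rw [add_zero] at h
    linear_combination -h
  have hpd0 : ∀ n, pd n (0 : V) = 0 := by
    intro n
    have h := hpd_add n 0 0
    rw [add_zero] at h
    linear_combination -h
  have hpd1 : ∀ n, pd n (1 : V) = 0 := by
    intro n
    have h := hpd_mul n 1 1
    rw [mul_one, one_mul, mul_one] at h
    linear_combination -h
  have hu1 : u 1 ≠ 0 := by
    intro h
    have h1 := hpdu 1 1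
    rw [h, hpd0, if_pos rfl] at h1
    exact one_ne_zero h1.symm
  have hpdinv : ∀ m, pd m ((u 1)⁻¹) = -(pd m (u 1) * ((u 1)⁻¹ * (u 1)⁻¹)) := by
    intro m
    have h := hpd_mul m (u 1) (u 1)⁻¹
    rw [mul_inv_cancel₀ hu1, hpd1] at h
    have h2 : u 1 * pd m (u 1)⁻¹ = -(pd m (u 1) * (u 1)⁻¹) := by linear_combination -h
    calc pd m (u 1)⁻¹ = (u 1)⁻¹ * (u 1 * pd m (u 1)⁻¹) := by
          rw [← mul_assoc, inv_mul_cancel₀ hu1, one_mul]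
      _ = _ := by rw [h2]; ring
  constructor
  · intro h
    -- key descent step
    have key : ∀ n, 1 ≤ n → (∀ k, n + 1 ≤ k → pd k F = 0) → pd n F = 0 := by
      intro n hn hvan
      have h2 := h (n + 2) (by omega)
      have hg2 : pd (n + 2) ((u 1)⁻¹ * d F) = 0 := by
        rw [hpd_mul, hpdinv, hpdu]
        rw [if_neg (by omega)]
        have : pd (n + 2) (d F) = 0 := by
          rw [hcommS (n + 1) F, hvan (n + 2) (by omega), hvan (n + 1) (by omega), hd0,
            add_zero]
        rw [this]
        ring
      have hg1 : pd (n + 1) ((u 1)⁻¹ * d F) = (u 1)⁻¹ * pd n F := by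
        rw [hpd_mul, hpdinv, hpdu]
        rw [if_neg (by omega)]
        rw [hcommS n F, hvan (n + 1) (by omega), hd0]
        ring
      have hA : pd (n + 2) (d ((u 1)⁻¹ * d F)) = (u 1)⁻¹ * pd n F := by
        rw [hcommS (n + 1) ((u 1)⁻¹ * d F), hg2, hg1, hd0, zero_add]
      rw [hpd_add, hpd_mul, hpd_mul, hpd_mul, hx1q, hx3q, hpdu, if_neg (by omega), hA,
        hvan (n + 2) (by omega)] at h2
      have h3 : x1 * ((u 1)⁻¹ * pd n F) = 0 := by linear_combination h2
      rcases mul_eq_zero.mp h3 with h4 | h4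
      · exact absurd h4 hx1
      rcases mul_eq_zero.mp h4 with h5 | h5
      · exact absurd h5 (inv_ne_zero hu1)
      · exact h5
    obtain ⟨N, hN⟩ := hfin F
    have descent : ∀ m n, 1 ≤ n → N ≤ n + m → pd n F = 0 := by
      intro m
      induction m with
      | zero => intro n hn hNn; exact hN n (by omega)
      | succ m ih =>
        intro n hn hNn
        exact key n hn (fun k hk => ih k (by omega) (by omega))
    have hF1 : ∀ n, 1 ≤ n → pd n F = 0 := fun n hn => descent N n hn (by omega)
    refine ⟨hF1, ?_⟩
    have h2 := h 2 (le_refl 2)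
    have hg2 : pd 2 ((u 1)⁻¹ * d F) = 0 := by
      rw [hpd_mul, hpdinv, hpdu]
      rw [if_neg (by omega)]
      have : pd 2 (d F) = 0 := by
        rw [show (2:ℕ) = 1 + 1 from rfl, hcommS 1 F, hF1 2 (by omega), hF1 1 (by omega),
          hd0, add_zero]
      rw [this]
      ring
    have hg1 : pd 1 ((u 1)⁻¹ * d F) = -((u 1)⁻¹ * (u 1)⁻¹) * d F + (u 1)⁻¹ * pd 0 F := by
      rw [hpd_mul, hpdinv, hpdu, if_pos rfl]
      rw [show (1:ℕ) = 0 + 1 from rfl, hcommS 0 F, hF1 1 (by omega), hd0]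
      ring
    have hA : pd 2 (d ((u 1)⁻¹ * d F)) = -((u 1)⁻¹ * (u 1)⁻¹) * d F + (u 1)⁻¹ * pd 0 F := by
      rw [show (2:ℕ) = 1 + 1 from rfl, hcommS 1 ((u 1)⁻¹ * d F), hg2, hg1, hd0, zero_add]
    rw [hpd_add, hpd_mul, hpd_mul, hpd_mul, hx1q, hx3q, hpdu, if_neg (by omega), hA,
      hF1 2 (by omega)] at h2
    have h3 : x1 * (-((u 1)⁻¹ * (u 1)⁻¹) * d F + (u 1)⁻¹ * pd 0 F) = 0 := by
      linear_combination h2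
    have h4 : -((u 1)⁻¹ * (u 1)⁻¹) * d F + (u 1)⁻¹ * pd 0 F = 0 := by
      rcases mul_eq_zero.mp h3 with h | h
      · exact absurd h hx1
      · exact h
    field_simp at h4
    have h5 : d F * u 1 = (pd 0 F * u 1) * u 1 := by linear_combination (-u 1) * h4
    exact mul_right_cancel₀ hu1 h5
  · rintro ⟨h1, h2⟩ n hn
    obtain ⟨m, rfl⟩ : ∃ m, n = m + 2 := ⟨n - 2, by omega⟩
    have hsimp : (u 1)⁻¹ * d F = pd 0 F := by
      rw [h2]; field_simp
    rw [hsimp]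
    have hA : pd (m + 2) (d (pd 0 F)) = 0 := by
      rw [hcommS (m + 1) (pd 0 F), hpd_comm, h1 (m + 2) (by omega), hpd0,
        hpd_comm, h1 (m + 1) (by omega), hpd0, hd0, add_zero]
    rw [hpd_add, hpd_mul, hpd_mul, hpd_mul, hx1q, hx3q, hpdu, if_neg (by omega), hA,
      h1 (m + 2) (by omega)]
    ring
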